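/- Lemma (reordering reduction-then-enlargement): Suppose M₁ reduces to M₂ = V (i.e., M₁ is an enlargement of V) and M₃ is an enlargement of V. Then there exist matrices M₄ and M₅ such that M₄ is an enlargement of M₁, M₅ = Pᵀ M₄ P for some permutation matrix P with det P = ±1 that fixes the first entries, and M₅ reduces to M₃. Concretely, with M₁ = ((V y₁ᵀ 0),(x₁ z₁ 0),(0 0 0) with 1 in position (n+1,n+2) pattern as in the enlargement form) and M₃ = ((V y₃ᵀ 0),(x₃ z₃ 0),(0 1 0)), the matrix M₄ obtained by appending to V the rows/columns for both (x₁,y₁,z₁) and (x₃,y₃,z₃) satisfies: the permutation swapping the two appended 2×2 blocks carries M₄ to a matrix M₅ whose reduction is M₃. -/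

import Mathlib

open Matrix

set_option maxHeartbeats 1000000

/-- Enlargement of the second type: `((V, yᵀ, 0), (x, z, 0), (0, 1, 0))`. -/
def enlargeB (n : ℕ) (V : Matrix (Fin n) (Fin n) ℤ) (x y : Fin n → ℤ) (z : ℤ) :
    Matrix (Fin (n + 2)) (Fin (n + 2)) ℤ :=
  Matrix.of fun i j =>
    if hi : (i : ℕ) < n then
      if hj : (j : ℕ) < n then V ⟨i, hi⟩ ⟨j, hj⟩
      else if (j : ℕ) = n then y ⟨i, hi⟩ else 0
    else if (i : ℕ) = n then
      if hj : (j : ℕ) < n then x ⟨j, hj⟩ else if (j : ℕ) = n then z else 0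
    else if (j : ℕ) = n then 1 else 0

/-- Extend a vector in `ℤⁿ` to `ℤ^{n+2}` by zeros. -/
def ext (n : ℕ) (x : Fin n → ℤ) : Fin (n + 2) → ℤ :=
  fun i => if h : (i : ℕ) < n then x ⟨i, h⟩ else 0

/-- Lemma 6.2 (`↘↗ ⟹ ↗≅↘`): if `M₁` reduces to `V` and `M₃` is an enlargement of `V`,
then the double enlargement `M₄` of `M₁` by the data `(x₃, y₃, z₃)` is carried, by a
permutation congruence fixing the first `n` coordinates, to a matrix `M₅` that reduces
to `M₃` (i.e. `M₅` is the enlargement of `M₃` by `(x₁, y₁, z₁)`). -/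
theorem stmt5 (n : ℕ) (V : Matrix (Fin n) (Fin n) ℤ)
    (x₁ y₁ x₃ y₃ : Fin n → ℤ) (z₁ z₃ : ℤ) :
    ∃ (P : Matrix (Fin (n + 4)) (Fin (n + 4)) ℤ) (σ : Equiv.Perm (Fin (n + 4))),
      (∀ i j, P i j = if σ i = j then 1 else 0) ∧
      (∀ i : Fin (n + 4), (i : ℕ) < n → σ i = i) ∧
      (P.det = 1 ∨ P.det = -1) ∧
      Pᵀ * enlargeB (n + 2) (enlargeB n V x₁ y₁ z₁) (ext n x₃) (ext n y₃) z₃ * P =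
        enlargeB (n + 2) (enlargeB n V x₃ y₃ z₃) (ext n x₁) (ext n y₁) z₁ := by
  set a : Fin (n + 4) := ⟨n, by omega⟩ with ha
  set b : Fin (n + 4) := ⟨n + 1, by omega⟩ with hb
  set c : Fin (n + 4) := ⟨n + 2, by omega⟩ with hc
  set d : Fin (n + 4) := ⟨n + 3, by omega⟩ with hd
  set σ : Equiv.Perm (Fin (n + 4)) := (Equiv.swap a c) * (Equiv.swap b d) with hσdef
  have hab : a ≠ b := by simp [ha, hb, Fin.ext_iff]
  have hac : a ≠ c := by simp [ha, hc, Fin.ext_iff]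
  have had : a ≠ d := by simp [ha, hd, Fin.ext_iff]
  have hbc : b ≠ c := by simp [hb, hc, Fin.ext_iff]
  have hbd : b ≠ d := by simp [hb, hd, Fin.ext_iff]
  have hcd : c ≠ d := by simp [hc, hd, Fin.ext_iff]
  have hσa : σ a = c := by
    simp only [hσdef, Equiv.Perm.mul_apply,
      Equiv.swap_apply_of_ne_of_ne hab had, Equiv.swap_apply_left]
  have hσb : σ b = d := by
    simp only [hσdef, Equiv.Perm.mul_apply, Equiv.swap_apply_left]
    exact Equiv.swap_apply_of_ne_of_ne had.symm hcd.symm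
  have hσc : σ c = a := by
    simp only [hσdef, Equiv.Perm.mul_apply,
      Equiv.swap_apply_of_ne_of_ne hbc.symm hcd, Equiv.swap_apply_right]
  have hσd : σ d = b := by
    simp only [hσdef, Equiv.Perm.mul_apply, Equiv.swap_apply_right]
    exact Equiv.swap_apply_of_ne_of_ne hab.symm hbc
  have hσlt : ∀ i : Fin (n + 4), (i : ℕ) < n → σ i = i := by
    intro i hi
    have h1 : i ≠ b := by simp [hb, Fin.ext_iff]; omega
    have h2 : i ≠ d := by simp [hd, Fin.ext_iff]; omega
    have h3 : i ≠ a := by simp [ha, Fin.ext_iff]; omega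
    have h4 : i ≠ c := by simp [hc, Fin.ext_iff]; omega
    simp only [hσdef, Equiv.Perm.mul_apply, Equiv.swap_apply_of_ne_of_ne h1 h2,
      Equiv.swap_apply_of_ne_of_ne h3 h4]
  have hcases : ∀ i : Fin (n + 4), (i : ℕ) < n ∨ i = a ∨ i = b ∨ i = c ∨ i = d := by
    intro i
    have := i.isLt
    simp only [ha, hb, hc, hd, Fin.ext_iff]
    omega
  have hinvol : ∀ i, σ (σ i) = i := by
    intro i
    rcases hcases i with h | h | h | h | h
    · rw [hσlt i h, hσlt i h]
    · rw [h, hσa, hσc]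
    · rw [h, hσb, hσd]
    · rw [h, hσc, hσa]
    · rw [h, hσd, hσb]
  have hσsymm : σ.symm = σ := Equiv.ext fun i => by
    rw [Equiv.symm_apply_eq, hinvol]
  refine ⟨σ.permMatrix ℤ, σ, ?_, hσlt, ?_, ?_⟩
  · intro i j
    simp [Equiv.Perm.permMatrix, PEquiv.toMatrix_apply, Equiv.toPEquiv_apply]
  · rw [Matrix.det_permutation]
    rcases Int.units_eq_one_or (Equiv.Perm.sign σ) with h | h <;> rw [h] <;> simp
  · have hT : (σ.permMatrix ℤ)ᵀ = σ.symm.toPEquiv.toMatrix := by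
      rw [Equiv.Perm.permMatrix, ← PEquiv.toMatrix_symm, Equiv.toPEquiv_symm]
    rw [hT, Equiv.Perm.permMatrix, PEquiv.toMatrix_toPEquiv_mul,
      PEquiv.mul_toMatrix_toPEquiv, hσsymm]
    ext i j
    simp only [Matrix.submatrix_apply, id_eq]
    rcases hcases i with hi | hi | hi | hi | hi
    · rw [hσlt i hi]
      rcases hcases j with hj | hj | hj | hj | hj
      · rw [hσlt j hj]
        norm_num [enlargeB, _root_.ext, Matrix.of_apply, hi, (show (i : ℕ) < n + 2 by omega), (show (i : ℕ) ≠ n by omega), (show (i : ℕ) ≠ n + 2 by omega), hj, (show (j : ℕ) < n + 2 by omega), (show (j : ℕ) ≠ n by omega), (show (j : ℕ) ≠ n + 2 by omega)]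
      · subst hj; rw [hσa]
        norm_num [enlargeB, _root_.ext, Matrix.of_apply, ha, hb, hc, hd, hi, (show (i : ℕ) < n + 2 by omega), (show (i : ℕ) ≠ n by omega), (show (i : ℕ) ≠ n + 2 by omega)]
      · subst hj; rw [hσb]
        norm_num [enlargeB, _root_.ext, Matrix.of_apply, ha, hb, hc, hd, hi, (show (i : ℕ) < n + 2 by omega), (show (i : ℕ) ≠ n by omega), (show (i : ℕ) ≠ n + 2 by omega)]
      · subst hj; rw [hσc]
        norm_num [enlargeB, _root_.ext, Matrix.of_apply, ha, hb, hc, hd, hi, (show (i : ℕ) < n + 2 by omega), (show (i : ℕ) ≠ n by omega), (show (i : ℕ) ≠ n + 2 by omega)]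
      · subst hj; rw [hσd]
        norm_num [enlargeB, _root_.ext, Matrix.of_apply, ha, hb, hc, hd, hi, (show (i : ℕ) < n + 2 by omega), (show (i : ℕ) ≠ n by omega), (show (i : ℕ) ≠ n + 2 by omega)]
    · subst hi; rw [hσa]
      rcases hcases j with hj | hj | hj | hj | hj
      · rw [hσlt j hj]
        norm_num [enlargeB, _root_.ext, Matrix.of_apply, ha, hb, hc, hd, hj, (show (j : ℕ) < n + 2 by omega), (show (j : ℕ) ≠ n by omega), (show (j : ℕ) ≠ n + 2 by omega)]
      · subst hj; rw [hσa]
        norm_num [enlargeB, _root_.ext, Matrix.of_apply, ha, hb, hc, hd]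
      · subst hj; rw [hσb]
        norm_num [enlargeB, _root_.ext, Matrix.of_apply, ha, hb, hc, hd]
      · subst hj; rw [hσc]
        norm_num [enlargeB, _root_.ext, Matrix.of_apply, ha, hb, hc, hd]
      · subst hj; rw [hσd]
        norm_num [enlargeB, _root_.ext, Matrix.of_apply, ha, hb, hc, hd]
    · subst hi; rw [hσb]
      rcases hcases j with hj | hj | hj | hj | hj
      · rw [hσlt j hj]
        norm_num [enlargeB, _root_.ext, Matrix.of_apply, ha, hb, hc, hd, hj, (show (j : ℕ) < n + 2 by omega), (show (j : ℕ) ≠ n by omega), (show (j : ℕ) ≠ n + 2 by omega)]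
      · subst hj; rw [hσa]
        norm_num [enlargeB, _root_.ext, Matrix.of_apply, ha, hb, hc, hd]
      · subst hj; rw [hσb]
        norm_num [enlargeB, _root_.ext, Matrix.of_apply, ha, hb, hc, hd]
      · subst hj; rw [hσc]
        norm_num [enlargeB, _root_.ext, Matrix.of_apply, ha, hb, hc, hd]
      · subst hj; rw [hσd]
        norm_num [enlargeB, _root_.ext, Matrix.of_apply, ha, hb, hc, hd]
    · subst hi; rw [hσc]
      rcases hcases j with hj | hj | hj | hj | hj
      · rw [hσlt j hj]
        norm_num [enlargeB, _root_.ext, Matrix.of_apply, ha, hb, hc, hd, hj, (show (j : ℕ) < n + 2 by omega), (show (j : ℕ) ≠ n by omega), (show (j : ℕ) ≠ n + 2 by omega)]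
      · subst hj; rw [hσa]
        norm_num [enlargeB, _root_.ext, Matrix.of_apply, ha, hb, hc, hd]
      · subst hj; rw [hσb]
        norm_num [enlargeB, _root_.ext, Matrix.of_apply, ha, hb, hc, hd]
      · subst hj; rw [hσc]
        norm_num [enlargeB, _root_.ext, Matrix.of_apply, ha, hb, hc, hd]
      · subst hj; rw [hσd]
        norm_num [enlargeB, _root_.ext, Matrix.of_apply, ha, hb, hc, hd]
    · subst hi; rw [hσd]
      rcases hcases j with hj | hj | hj | hj | hj
      · rw [hσlt j hj]
        norm_num [enlargeB, _root_.ext, Matrix.of_apply, ha, hb, hc, hd, hj, (show (j : ℕ) < n + 2 by omega), (show (j : ℕ) ≠ n by omega), (show (j : ℕ) ≠ n + 2 by omega)]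
      · subst hj; rw [hσa]
        norm_num [enlargeB, _root_.ext, Matrix.of_apply, ha, hb, hc, hd]
      · subst hj; rw [hσb]
        norm_num [enlargeB, _root_.ext, Matrix.of_apply, ha, hb, hc, hd]
      · subst hj; rw [hσc]
        norm_num [enlargeB, _root_.ext, Matrix.of_apply, ha, hb, hc, hd]
      · subst hj; rw [hσd]
        norm_num [enlargeB, _root_.ext, Matrix.of_apply, ha, hb, hc, hd]
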